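/- Let β₀ > 1 and define β_{i+1} = β₀ − 1/(4β_i). Then β₀ − 1/(4β₀) − Σ_{i=1}^{∞} 1/(4^{i+1} β_i ∏_{j=0}^{i-1} β_j²) > 0, where the infinite series converges. -/

import Mathlib

open Finset

/-- If `β₀ > 1` and `β_{i+1} = β₀ − 1/(4 β_i)`, then the series
`Σ_{i≥1} 1/(4^{i+1} β_i ∏_{j=0}^{i-1} β_j²)` converges and
`β₀ − 1/(4β₀) − Σ_{i≥1} 1/(4^{i+1} β_i ∏_{j=0}^{i-1} β_j²) > 0`. -/
theorem beta_series_pos (β : ℕ → ℝ) (h1 : 1 < β 0)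
    (hrec : ∀ i, β (i + 1) = β 0 - 1 / (4 * β i)) :
    Summable (fun i : ℕ =>
      1 / (4 ^ (i + 2) * β (i + 1) * ∏ j ∈ Finset.range (i + 1), (β j) ^ 2)) ∧
    0 < β 0 - 1 / (4 * β 0) - ∑' i : ℕ,
      1 / (4 ^ (i + 2) * β (i + 1) * ∏ j ∈ Finset.range (i + 1), (β j) ^ 2) := by
  -- Lower bound: all β i ≥ β 0 - 1/2 > 1/2
  have hb : ∀ i, β 0 - 1/2 ≤ β i := by
    intro i
    induction i with
    | zero => linarith
    | succ n ih =>
      have hbn : (1:ℝ)/2 < β n := by linarith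
      have hpos : (0:ℝ) < β n := by linarith
      have h4 : 1 / (4 * β n) ≤ 1/2 := by
        rw [div_le_div_iff₀ (by linarith) (by norm_num)]
        linarith
      rw [hrec n]; linarith
  have hbpos : ∀ i, (0:ℝ) < β i := fun i => by have := hb i; linarith
  have hprodpos : ∀ n, (0:ℝ) < ∏ j ∈ Finset.range n, (β j) ^ 2 := by
    intro n
    exact Finset.prod_pos fun j _ => pow_pos (hbpos j) 2
  -- Key telescoping identity
  have key : ∀ i, β i - β (i + 1) =
      1 / (4 ^ (i + 1) * β i * ∏ j ∈ Finset.range i, (β j) ^ 2) := by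
    intro i
    induction i with
    | zero =>
      simp only [Finset.range_zero, Finset.prod_empty, mul_one, pow_one]
      rw [hrec 0]; ring
    | succ n ih =>
      have h1n := hbpos n
      have h2n := hbpos (n + 1)
      have hP := hprodpos n
      have hrec1 := hrec n
      have hrec2 := hrec (n + 1)
      have e1 : β (n + 1) - β 0 = - (1 / (4 * β n)) := by rw [hrec1]; ring
      have hdiff : β (n + 1) - β (n + 2) = (β n - β (n + 1)) / (4 * β n * β (n + 1)) := by
        have e2 : β (n + 1) - β (n + 2) = 1 / (4 * β (n + 1)) - 1 / (4 * β n) := by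
          rw [hrec2]; linarith
        rw [e2]
        field_simp
      rw [hdiff, ih, Finset.prod_range_succ]
      rw [div_div]
      congr 1
      ring
  set f : ℕ → ℝ := fun i =>
    1 / (4 ^ (i + 2) * β (i + 1) * ∏ j ∈ Finset.range (i + 1), (β j) ^ 2) with hf
  have hfi : ∀ i, f i = β (i + 1) - β (i + 2) := by
    intro i
    rw [hf]
    simp only
    rw [key (i + 1)]
  have hfnonneg : ∀ i, 0 ≤ f i := by
    intro i
    rw [hf]
    exact le_of_lt (div_pos one_pos
      (mul_pos (mul_pos (pow_pos (by norm_num) _) (hbpos _)) (hprodpos _)))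
  -- partial sums telescope
  have hsum : ∀ n, ∑ i ∈ Finset.range n, f i = β 1 - β (n + 1) := by
    intro n
    have : ∀ i, f i = (fun k => β (k + 1)) i - (fun k => β (k + 1)) (i + 1) := by
      intro i; rw [hfi i]
    calc ∑ i ∈ Finset.range n, f i
        = ∑ i ∈ Finset.range n, ((fun k => β (k + 1)) i - (fun k => β (k + 1)) (i + 1)) := by
          exact Finset.sum_congr rfl fun i _ => this i
      _ = β 1 - β (n + 1) := Finset.sum_range_sub' (fun k => β (k + 1)) n
  have hbound : ∀ n, ∑ i ∈ Finset.range n, f i ≤ β 1 - (β 0 - 1/2) := by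
    intro n
    rw [hsum n]
    have := hb (n + 1)
    linarith
  have hsummable : Summable f :=
    summable_of_sum_range_le hfnonneg hbound
  refine ⟨hsummable, ?_⟩
  have htsum : ∑' i, f i ≤ β 1 - (β 0 - 1/2) :=
    Summable.tsum_le_of_sum_range_le hsummable hbound
  have hβ1 : β 1 = β 0 - 1 / (4 * β 0) := hrec 0
  have : β 0 - 1 / (4 * β 0) - ∑' i, f i ≥ β 0 - 1/2 := by
    rw [← hβ1]; linarith
  have h12 : (1:ℝ)/2 < β 0 - 1/2 := by linarith
  linarith
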